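/- Let V_s, V, Z, S ∈ ℂ with Z ≠ 0, and write S = P + iQ and Z = R + iX with P, Q, R, X real. If conj(S) = conj(V)·(V_s − V)/Z, then |V|⁴ + (2(PR + QX) − |V_s|²)·|V|² + |S|²·|Z|² = 0. -/

import Mathlib

theorem two_bus_quadratic
    (V_s V Z S : ℂ) (hZ : Z ≠ 0)
    (P Q R X : ℝ) (hS : S = P + Q * Complex.I) (hZRX : Z = R + X * Complex.I)
    (h : (starRingEnd ℂ) S = (starRingEnd ℂ) V * (V_s - V) / Z) :
    ‖V‖ ^ 4 + (2 * (P * R + Q * X) - ‖V_s‖ ^ 2) * ‖V‖ ^ 2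
      + ‖S‖ ^ 2 * ‖Z‖ ^ 2 = 0 := by
  have hre : ((starRingEnd ℂ) S * Z).re = P * R + Q * X := by
    subst hS hZRX
    simp [Complex.mul_re, Complex.add_re, Complex.add_im]
  have h1 : (starRingEnd ℂ) V * V_s = (starRingEnd ℂ) S * Z + (Complex.normSq V : ℂ) := by
    have h' : (starRingEnd ℂ) S * Z = (starRingEnd ℂ) V * (V_s - V) := by
      field_simp at h
      linear_combination h
    rw [h', mul_sub]
    have : (starRingEnd ℂ) V * V = (Complex.normSq V : ℂ) := by
      rw [mul_comm, Complex.mul_conj]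
    rw [this]
    ring
  have h3 := congrArg Complex.normSq h1
  rw [Complex.normSq_mul, Complex.normSq_conj, Complex.normSq_add,
    Complex.normSq_mul, Complex.normSq_conj] at h3
  have hcross : ((starRingEnd ℂ) S * Z * (starRingEnd ℂ) ((Complex.normSq V : ℂ))).re
      = (P * R + Q * X) * Complex.normSq V := by
    rw [Complex.conj_ofReal]
    rw [Complex.mul_re]
    simp [hre]
  rw [hcross] at h3
  simp only [Complex.normSq_ofReal] at h3
  have e1 : ‖V‖ ^ 2 = Complex.normSq V := Complex.sq_norm V
  have e2 : ‖V_s‖ ^ 2 = Complex.normSq V_s := Complex.sq_norm V_s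
  have e3 : ‖S‖ ^ 2 = Complex.normSq S := Complex.sq_norm S
  have e4 : ‖Z‖ ^ 2 = Complex.normSq Z := Complex.sq_norm Z
  have e5 : ‖V‖ ^ 4 = Complex.normSq V ^ 2 := by
    rw [show (4:ℕ) = 2*2 from rfl, pow_mul, e1]
  rw [e1, e2, e3, e4, e5]
  nlinarith [h3]
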